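/- Let n, k be integers with 2 ≤ 2k < n and let δ ∈ (-(n-2k)/(2k), (n-2k)/(2k)). Let w : (-∞, 0] × S^{n-1} → ℝ be a C² solution of ∂²_t w + (n-k)/(k(n-1)) Δ_θ w - ((n-2k)/(2k))² w = 0 on (-∞,0) × S^{n-1}, with w(0,θ) = 0 for all θ, and |w(t,θ)| ≤ C (cosh t)^{-δ} for some C > 0. Then w ≡ 0. -/

import Mathlib

open Set Real Filter
open scoped RealInnerProductSpace

lemma scalar_ode (m b C' : ℝ) (hm : 0 < m) (hb : 0 ≤ b) (hbm : b < m) (hC' : 0 ≤ C')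
    (f : ℝ → ℝ) (hf : ContDiffOn ℝ 2 f (Set.Iic 0))
    (hode : ∀ t < (0:ℝ), derivWithin (derivWithin f (Set.Iic 0)) (Set.Iic 0) t = m ^ 2 * f t)
    (hbd : ∀ t ≤ (0:ℝ), |f t| ≤ C' * Real.exp (-b * t))
    (hf0 : f 0 = 0) : ∀ t ≤ (0:ℝ), f t = 0 := by
  set f1 := derivWithin f (Set.Iic 0) with hf1def
  have hu : UniqueDiffOn ℝ (Set.Iic (0:ℝ)) := uniqueDiffOn_Iic 0
  have hf1 : ContDiffOn ℝ 1 f1 (Set.Iic 0) := hf.derivWithin hu (by norm_num)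
  have hmem : ∀ t : ℝ, t < 0 → Set.Iic (0:ℝ) ∈ nhds t := fun t ht => Iic_mem_nhds ht
  have hfd : ∀ t < (0:ℝ), HasDerivAt f (f1 t) t := fun t ht =>
    ((hf.differentiableOn (by norm_num) t ht.le).hasDerivWithinAt).hasDerivAt (hmem t ht)
  have hf1d : ∀ t < (0:ℝ), HasDerivAt f1 (m ^ 2 * f t) t := by
    intro t ht
    have h := ((hf1.differentiableOn (by norm_num) t ht.le).hasDerivWithinAt).hasDerivAt (hmem t ht)
    rwa [hode t ht] at h
  set g : ℝ → ℝ := fun t => Real.exp (m * t) * (f1 t - m * f t) with hgdef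
  set gh : ℝ → ℝ := fun t => Real.exp (-(m * t)) * (f1 t + m * f t) with hghdef
  have hg' : ∀ t < (0:ℝ), HasDerivAt g 0 t := by
    intro t ht
    have he : HasDerivAt (fun t => Real.exp (m * t)) (Real.exp (m * t) * m) t :=
      (Real.hasDerivAt_exp (m * t)).comp t ((hasDerivAt_id t).const_mul m) |>.congr_deriv (by ring)
    have hi : HasDerivAt (fun t => f1 t - m * f t) (m ^ 2 * f t - m * f1 t) t :=
      (hf1d t ht).sub ((hfd t ht).const_mul m)
    have := he.mul hi
    refine this.congr_deriv ?_
    ring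
  have hgh' : ∀ t < (0:ℝ), HasDerivAt gh 0 t := by
    intro t ht
    have he : HasDerivAt (fun t => Real.exp (-(m * t))) (Real.exp (-(m * t)) * (-m)) t := by
      have := (Real.hasDerivAt_exp (-(m * t))).comp t (((hasDerivAt_id t).const_mul m).neg)
      exact this.congr_deriv (by simp)
    have hi : HasDerivAt (fun t => f1 t + m * f t) (m ^ 2 * f t + m * f1 t) t :=
      (hf1d t ht).add ((hfd t ht).const_mul m)
    have := he.mul hi
    refine this.congr_deriv ?_
    ring
  -- constancy on Iio 0
  have hconst : ∀ (F : ℝ → ℝ), (∀ t < (0:ℝ), HasDerivAt F 0 t) → ∀ t < (0:ℝ), F t = F (-1) := by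
    intro F hF t ht
    refine (convex_Iio (0:ℝ)).is_const_of_fderivWithin_eq_zero (𝕜 := ℝ)
      (fun x hx => ((hF x hx).differentiableAt).differentiableWithinAt) ?_ ht (by norm_num)
    intro x hx
    have h0 : HasFDerivAt F (0 : ℝ →L[ℝ] ℝ) x := by
      have h := (hF x hx).hasFDerivAt
      simpa using h
    rw [fderivWithin_of_isOpen isOpen_Iio hx, h0.fderiv]
  -- named pieces
  have hgc : ∀ t < (0:ℝ), g t = g (-1) := hconst g hg'
  have hghc : ∀ t < (0:ℝ), gh t = gh (-1) := hconst gh hgh'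
  set c1 := g (-1) with hc1def
  set c2 := gh (-1) with hc2def
  have hexp : ∀ t : ℝ, Real.exp (-(m*t)) * Real.exp (m*t) = 1 := by
    intro t; rw [← Real.exp_add]; simp
  have hc1eq : ∀ t < (0:ℝ), c1 = c2 * Real.exp (2*m*t) - (2*m) * f t * Real.exp (m*t) := by
    intro t ht
    have h1 : Real.exp (m*t) * (f1 t - m * f t) = c1 := hgc t ht
    have h2 : Real.exp (-(m*t)) * (f1 t + m * f t) = c2 := hghc t ht
    have hexp2 : Real.exp (m*t) * Real.exp (m*t) = Real.exp (2*m*t) := by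
      rw [← Real.exp_add]; ring_nf
    have : c2 * Real.exp (2*m*t) - (2*m) * f t * Real.exp (m*t) = c1 := by
      calc c2 * Real.exp (2*m*t) - (2*m) * f t * Real.exp (m*t)
          = (Real.exp (-(m*t)) * (f1 t + m * f t)) * (Real.exp (m*t) * Real.exp (m*t))
            - (2*m) * f t * Real.exp (m*t) := by rw [h2, hexp2]
        _ = (Real.exp (-(m*t)) * Real.exp (m*t)) * ((f1 t + m * f t) * Real.exp (m*t))
            - (2*m) * f t * Real.exp (m*t) := by ring
        _ = Real.exp (m*t) * (f1 t - m * f t) := by rw [hexp t]; ring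
        _ = c1 := h1
    exact this.symm
  have hc1b : ∀ t ≤ (-1:ℝ), |c1| ≤ |c2| * Real.exp (2*m*t) + 2*m*C' * Real.exp ((m-b)*t) := by
    intro t ht
    have ht0 : t < 0 := by linarith
    rw [hc1eq t ht0]
    calc |c2 * Real.exp (2*m*t) - (2*m) * f t * Real.exp (m*t)|
        ≤ |c2 * Real.exp (2*m*t)| + |(2*m) * f t * Real.exp (m*t)| := abs_sub _ _
      _ = |c2| * Real.exp (2*m*t) + 2*m * |f t| * Real.exp (m*t) := by
          rw [abs_mul c2, abs_of_pos (Real.exp_pos _), abs_mul ((2*m) * f t),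
            abs_of_pos (Real.exp_pos _), abs_mul (2*m),
            abs_of_pos (by linarith : (0:ℝ) < 2*m)]
      _ ≤ |c2| * Real.exp (2*m*t) + 2*m * (C' * Real.exp (-b*t)) * Real.exp (m*t) := by
          gcongr
          exact hbd t ht0.le
      _ = |c2| * Real.exp (2*m*t) + 2*m*C' * Real.exp ((m-b)*t) := by
          rw [show (2:ℝ)*m * (C' * Real.exp (-b*t)) * Real.exp (m*t)
              = 2*m*C' * (Real.exp (-b*t) * Real.exp (m*t)) from by ring, ← Real.exp_add]
          ring_nf
  have hlim : Filter.Tendsto (fun t => |c2| * Real.exp (2*m*t) + 2*m*C' * Real.exp ((m-b)*t))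
      Filter.atBot (nhds 0) := by
    have l1 : Filter.Tendsto (fun t : ℝ => Real.exp (2*m*t)) Filter.atBot (nhds 0) :=
      Real.tendsto_exp_atBot.comp (Filter.Tendsto.const_mul_atBot (by linarith) Filter.tendsto_id)
    have l2 : Filter.Tendsto (fun t : ℝ => Real.exp ((m-b)*t)) Filter.atBot (nhds 0) :=
      Real.tendsto_exp_atBot.comp (Filter.Tendsto.const_mul_atBot (by linarith) Filter.tendsto_id)
    have := (l1.const_mul |c2|).add (l2.const_mul (2*m*C'))
    simpa using this
  have hc1 : c1 = 0 := by
    have h0 : |c1| ≤ 0 :=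
      ge_of_tendsto hlim (Filter.eventually_atBot.2 ⟨-1, fun t ht => hc1b t ht⟩)
    exact abs_eq_zero.mp (le_antisymm h0 (abs_nonneg _))
  have hfeq : ∀ t < (0:ℝ), f t = c2 * Real.exp (m*t) / (2*m) := by
    intro t ht
    have h1 : Real.exp (m*t) * (f1 t - m * f t) = 0 := by
      have hh := hgc t ht; rw [hc1] at hh; exact hh
    have h2 : Real.exp (-(m*t)) * (f1 t + m * f t) = c2 := hghc t ht
    have hE : Real.exp (m*t) ≠ 0 := (Real.exp_pos _).ne'
    have hf1t : f1 t - m * f t = 0 := by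
      rcases mul_eq_zero.mp h1 with h | h
      · exact absurd h hE
      · exact h
    have hkey : c2 * Real.exp (m*t) = 2*m*f t := by
      rw [← h2]
      have hf1t' : f1 t = m * f t := by linarith
      calc (Real.exp (-(m*t)) * (f1 t + m * f t)) * Real.exp (m*t)
          = (Real.exp (-(m*t)) * Real.exp (m*t)) * (2*m*f t) := by rw [hf1t']; ring
        _ = 2*m*f t := by rw [hexp t]; ring
    field_simp
    linarith
  have hc2 : c2 = 0 := by
    have hcont : ContinuousWithinAt f (Set.Iic 0) 0 := (hf.continuousOn) 0 (Set.mem_Iic.mpr le_rfl)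
    have h1 : Filter.Tendsto f (nhdsWithin 0 (Set.Iio 0)) (nhds 0) := by
      have := hcont.tendsto
      rw [hf0] at this
      exact this.mono_left (nhdsWithin_mono _ Set.Iio_subset_Iic_self)
    have h2 : Filter.Tendsto f (nhdsWithin 0 (Set.Iio 0)) (nhds (c2 / (2*m))) := by
      have hcts : Continuous (fun t : ℝ => c2 * Real.exp (m*t) / (2*m)) :=
        (continuous_const.mul (Real.continuous_exp.comp (continuous_const.mul continuous_id))).div_const _
      have hc := (hcts.tendsto 0).mono_left (nhdsWithin_le_nhds (s := Set.Iio 0))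
      simp only [mul_zero, Real.exp_zero, mul_one] at hc
      refine Filter.Tendsto.congr' ?_ hc
      filter_upwards [self_mem_nhdsWithin] with t ht
      exact (hfeq t ht).symm
    have hu2 : c2 / (2*m) = 0 := tendsto_nhds_unique h2 h1
    have : (2:ℝ)*m ≠ 0 := by positivity
    field_simp at hu2
    simpa using hu2
  intro t ht
  rcases lt_or_eq_of_le ht with ht' | ht'
  · rw [hfeq t ht', hc2]; simp
  · rw [ht', hf0]

lemma cosh_bound (δ : ℝ) (t : ℝ) (ht : t ≤ 0) :
    Real.cosh t ^ (-δ) ≤ 2 ^ |δ| * Real.exp (-|δ| * t) := by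
  rcases le_or_gt 0 δ with hδ | hδ
  · rw [abs_of_nonneg hδ]
    have h1 : Real.exp (-t) / 2 ≤ Real.cosh t := by
      rw [Real.cosh_eq]; nlinarith [Real.exp_pos t]
    have h2 : Real.cosh t ^ (-δ) ≤ (Real.exp (-t) / 2) ^ (-δ) :=
      Real.rpow_le_rpow_of_nonpos (by positivity) h1 (neg_nonpos.mpr hδ)
    refine h2.trans ?_
    rw [Real.div_rpow (Real.exp_pos _).le (by norm_num), ← Real.exp_mul,
      Real.rpow_neg (by norm_num : (0:ℝ) ≤ 2), div_inv_eq_mul]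
    have hle : Real.exp (-t * -δ) ≤ Real.exp (-δ * t) := Real.exp_le_exp.mpr (by nlinarith)
    calc Real.exp (-t * -δ) * 2 ^ δ ≤ Real.exp (-δ * t) * 2 ^ δ := by
          gcongr
      _ = 2 ^ δ * Real.exp (-δ * t) := by ring
  · rw [abs_of_neg hδ]
    have h1 : Real.cosh t ≤ Real.exp (-t) := by
      have := Real.exp_le_exp.mpr (show t ≤ -t by linarith)
      rw [Real.cosh_eq]; linarith
    have h2 : Real.cosh t ^ (-δ) ≤ Real.exp (-t) ^ (-δ) :=
      Real.rpow_le_rpow (Real.cosh_pos t).le h1 (by linarith)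
    refine h2.trans ?_
    rw [← Real.exp_mul]
    have h3 : (1:ℝ) ≤ 2 ^ (-δ) := by
      have := Real.rpow_le_rpow_of_exponent_le (by norm_num : (1:ℝ) ≤ 2)
        (by linarith : (0:ℝ) ≤ -δ)
      simpa using this
    calc Real.exp (-t * -δ) = Real.exp (- -δ * t) := by ring_nf
      _ ≤ 2 ^ (-δ) * Real.exp (- -δ * t) := le_mul_of_one_le_left (Real.exp_pos _).le h3



/-- Uniqueness for the limit problem on the half-cylinder (-∞,0] × S^{n-1}:
a solution of ∂²_t w + (n-k)/(k(n-1)) Δ_θ w - ((n-2k)/(2k))² w = 0 with zero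
boundary value at t = 0 and bound |w| ≤ C (cosh t)^{-δ} vanishes identically.
The spherical Laplacian Δ_θ is modeled by a symmetric operator with eigenvalues
-j(j+n-2) whose eigenvectors span a dense subspace. -/
theorem stmt_7 (n k : ℕ) (h2 : 2 ≤ 2 * k) (hkn : 2 * k < n) (δ : ℝ)
    (hδ₁ : -(((n : ℝ) - 2 * k) / (2 * k)) < δ) (hδ₂ : δ < ((n : ℝ) - 2 * k) / (2 * k))
    {H : Type*} [NormedAddCommGroup H] [InnerProductSpace ℝ H]
    (Δθ : H →ₗ[ℝ] H) (hsym : Δθ.IsSymmetric)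
    (hspec : ∀ (μ : ℝ) (e : H), e ≠ 0 → Δθ e = μ • e →
        ∃ j : ℕ, μ = -((j : ℝ) * ((j : ℝ) + n - 2)))
    (hdense : Dense (↑(Submodule.span ℝ {e : H | ∃ a : ℝ, Δθ e = a • e}) : Set H))
    (w : ℝ → H) (hw : ContDiffOn ℝ 2 w (Set.Iic 0))
    (C : ℝ) (hC : 0 < C)
    (heq : ∀ t < 0,
      derivWithin (derivWithin w (Set.Iic 0)) (Set.Iic 0) t
        + (((n : ℝ) - k) / (k * ((n : ℝ) - 1))) • Δθ (w t)
        - ((((n : ℝ) - 2 * k) / (2 * k)) ^ 2) • w t = 0)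
    (hbd : ∀ t ≤ 0, ‖w t‖ ≤ C * (Real.cosh t) ^ (-δ))
    (hbc : w 0 = 0) :
    ∀ t ≤ 0, w t = 0 := by
  have hu : UniqueDiffOn ℝ (Set.Iic (0:ℝ)) := uniqueDiffOn_Iic 0
  have hk1 : 1 ≤ k := by omega
  have hn3 : 3 ≤ n := by omega
  have hkR : (1:ℝ) ≤ (k:ℝ) := by exact_mod_cast hk1
  have hnR : (3:ℝ) ≤ (n:ℝ) := by exact_mod_cast hn3
  have hknR : 2*(k:ℝ) < n := by exact_mod_cast hkn
  set a : ℝ := ((n:ℝ) - 2*k) / (2*k) with hadef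
  set c : ℝ := ((n:ℝ) - k) / (k * ((n:ℝ) - 1)) with hcdef
  have ha : 0 < a := div_pos (by linarith) (by linarith)
  have hc' : 0 < c := div_pos (by linarith) (by nlinarith)
  have hδa : |δ| < a := abs_lt.mpr ⟨hδ₁, hδ₂⟩
  have key : ∀ e : H, (∃ μ : ℝ, Δθ e = μ • e) → ∀ t ≤ (0:ℝ), (inner ℝ e (w t) : ℝ) = 0 := by
    rintro e ⟨μ, hμ⟩
    by_cases he : e = 0
    · intro t _; simp [he]
    obtain ⟨j, hj⟩ := hspec μ e he hμ
    have hj0 : (0:ℝ) ≤ (j:ℝ) := Nat.cast_nonneg j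
    set lam : ℝ := (j:ℝ) * ((j:ℝ) + n - 2) with hlamdef
    have hlam : 0 ≤ lam := mul_nonneg hj0 (by linarith)
    set m : ℝ := Real.sqrt (a^2 + c*lam) with hmdef
    have hm2 : m^2 = a^2 + c*lam := Real.sq_sqrt (by positivity)
    have ham : a ≤ m := by
      rw [hmdef]
      nth_rewrite 1 [← Real.sqrt_sq ha.le]
      exact Real.sqrt_le_sqrt (by nlinarith [mul_nonneg hc'.le hlam])
    have hm : 0 < m := lt_of_lt_of_le ha ham
    set L : H →L[ℝ] ℝ := innerSL ℝ e with hLdef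
    set f : ℝ → ℝ := fun s => L (w s) with hfdef
    have hfc : ContDiffOn ℝ 2 f (Set.Iic 0) := L.contDiff.comp_contDiffOn hw
    have hw1 : ∀ x ∈ Set.Iic (0:ℝ),
        derivWithin f (Set.Iic 0) x = L (derivWithin w (Set.Iic 0) x) := by
      intro x hx
      have hdw : HasDerivWithinAt w (derivWithin w (Set.Iic 0) x) (Set.Iic 0) x :=
        (hw.differentiableOn (by norm_num) x hx).hasDerivWithinAt
      exact (L.hasFDerivAt.comp_hasDerivWithinAt x hdw).derivWithin (hu x hx)
    have hwc1 : ContDiffOn ℝ 1 (derivWithin w (Set.Iic 0)) (Set.Iic 0) :=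
      hw.derivWithin hu (by norm_num)
    have hode : ∀ t < (0:ℝ),
        derivWithin (derivWithin f (Set.Iic 0)) (Set.Iic 0) t = m^2 * f t := by
      intro t ht
      have h1 : derivWithin (derivWithin f (Set.Iic 0)) (Set.Iic 0) t
          = derivWithin (⇑L ∘ derivWithin w (Set.Iic 0)) (Set.Iic 0) t :=
        derivWithin_congr hw1 (hw1 t ht.le)
      rw [h1]
      have hdw1 : HasDerivWithinAt (derivWithin w (Set.Iic 0))
          (derivWithin (derivWithin w (Set.Iic 0)) (Set.Iic 0) t) (Set.Iic 0) t :=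
        (hwc1.differentiableOn (by norm_num) t ht.le).hasDerivWithinAt
      rw [(L.hasFDerivAt.comp_hasDerivWithinAt t hdw1).derivWithin (hu t ht.le)]
      have hW : derivWithin (derivWithin w (Set.Iic 0)) (Set.Iic 0) t
          = (a^2) • w t - c • Δθ (w t) := by
        have h' : derivWithin (derivWithin w (Set.Iic 0)) (Set.Iic 0) t + c • Δθ (w t)
            = (a^2) • w t := by
          have hh := heq t ht; rwa [sub_eq_zero] at hh
        exact eq_sub_of_add_eq h'
      rw [hW, map_sub, map_smul, map_smul]
      have hΔ : L (Δθ (w t)) = μ * L (w t) := by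
        have h1' : (inner ℝ e (Δθ (w t)) : ℝ) = (inner ℝ (Δθ e) (w t) : ℝ) := (hsym e (w t)).symm
        have h2' : (inner ℝ (Δθ e) (w t) : ℝ) = μ * (inner ℝ e (w t) : ℝ) := by rw [hμ, real_inner_smul_left]
        simpa [hLdef] using h1'.trans h2'
      rw [smul_eq_mul, smul_eq_mul, hΔ, hm2, hj]
      ring
    have hbdf : ∀ t ≤ (0:ℝ), |f t| ≤ (C * ‖e‖ * 2 ^ |δ|) * Real.exp (-|δ| * t) := by
      intro t ht
      have h1 : |f t| ≤ ‖e‖ * ‖w t‖ := by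
        simpa [hfdef, hLdef] using abs_real_inner_le_norm e (w t)
      calc |f t| ≤ ‖e‖ * ‖w t‖ := h1
        _ ≤ ‖e‖ * (C * Real.cosh t ^ (-δ)) :=
            mul_le_mul_of_nonneg_left (hbd t ht) (norm_nonneg e)
        _ ≤ ‖e‖ * (C * (2 ^ |δ| * Real.exp (-|δ| * t))) := by
            have := cosh_bound δ t ht
            gcongr
        _ = (C * ‖e‖ * 2 ^ |δ|) * Real.exp (-|δ| * t) := by ring
    have hf0 : f 0 = 0 := by simp [hfdef, hbc]
    have hzero := scalar_ode m |δ| (C * ‖e‖ * 2 ^ |δ|) hm (abs_nonneg δ)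
      (lt_of_lt_of_le hδa ham) (by positivity) f hfc hode hbdf hf0
    intro t ht
    simpa [hfdef, hLdef] using hzero t ht
  intro t ht
  have hspan : ∀ v ∈ Submodule.span ℝ {e : H | ∃ a : ℝ, Δθ e = a • e}, (inner ℝ (w t) v : ℝ) = 0 := by
    intro v hv
    induction hv using Submodule.span_induction with
    | mem x hx => rw [real_inner_comm]; exact key x hx t ht
    | zero => simp
    | add x y _ _ hx hy => rw [inner_add_right, hx, hy]; norm_num
    | smul r x _ hx => rw [real_inner_smul_right, hx]; ring
  exact hdense.eq_zero_of_inner_left ℝ fun v hv => hspan v hv
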